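/- Let G be a connected simple graph on a finite vertex set K with shortest-path distance d, let r ≥ 1, let p ≥ 1, let σ > 0, and let Φ_1, …, Φ_p be complex matrices indexed by K × K such that for each k, [Φ_k]_{ij} = 0 whenever i ≠ j and d(i,j) > r. Define Φ(z) := I − Σ_{k=1}^{p} z^k Φ_k and S(ω) := (2π/σ²) · Φ(e^{iω})ᵀ Φ(e^{−iω}) for ω ∈ [−π, π]. Then for every pair (i,j) with d(i,j) ≥ 2r + 1, the entry [S(ω)]_{ij} = 0 for all ω ∈ [−π, π]. -/

import Mathlib

open scoped Matrix

/-- For a GNAR-type VAR whose coefficient matrices `Φ_k` satisfy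
`[Φ_k]_{ij} = 0` whenever `i ≠ j` and `d(i,j) > r`, the inverse spectral
matrix `S(ω) = (2π/σ²) Φ(e^{iω})ᵀ Φ(e^{−iω})`, with
`Φ(z) = I − Σ_{k=1}^p z^k Φ_k`, satisfies `[S(ω)]_{ij} = 0` for all
`ω ∈ [−π, π]` whenever `d(i,j) ≥ 2r + 1`. -/
theorem stmt_5 {K : Type*} [Fintype K] [DecidableEq K]
    (G : SimpleGraph K) (hG : G.Connected)
    (r p : ℕ) (hr : 1 ≤ r) (hp : 1 ≤ p) (σ : ℝ) (hσ : 0 < σ)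
    (Φ : ℕ → Matrix K K ℂ)
    (hΦ : ∀ k ∈ Finset.Icc 1 p, ∀ i j, i ≠ j → r < G.dist i j → Φ k i j = 0)
    (Φpoly : ℂ → Matrix K K ℂ)
    (hΦpoly : ∀ z : ℂ,
      Φpoly z = (1 : Matrix K K ℂ) - ∑ k ∈ Finset.Icc 1 p, z ^ k • Φ k)
    (S : ℝ → Matrix K K ℂ)
    (hS : ∀ ω : ℝ, S ω = ((2 * Real.pi / σ ^ 2 : ℝ) : ℂ) •
      ((Φpoly (Complex.exp (Complex.I * (ω : ℂ))))ᵀ *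
        Φpoly (Complex.exp (-(Complex.I * (ω : ℂ)))))) :
    ∀ i j, 2 * r + 1 ≤ G.dist i j →
      ∀ ω ∈ Set.Icc (-Real.pi) Real.pi, S ω i j = 0 := by
  -- key: entries of Φpoly z vanish at distance > r off the diagonal
  have key : ∀ z : ℂ, ∀ a b : K, a ≠ b → r < G.dist a b → Φpoly z a b = 0 := by
    intro z a b hab hd
    rw [hΦpoly]
    simp only [Matrix.sub_apply, Matrix.one_apply_ne hab, Matrix.sum_apply,
      Matrix.smul_apply, smul_eq_mul]
    rw [zero_sub, neg_eq_zero]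
    apply Finset.sum_eq_zero
    intro k hk
    rw [hΦ k hk a b hab hd, mul_zero]
  intro i j hij ω hω
  rw [hS]
  simp only [Matrix.smul_apply, Matrix.mul_apply, Matrix.transpose_apply, smul_eq_mul]
  rw [show (∑ l, Φpoly (Complex.exp (Complex.I * (ω : ℂ))) l i *
      Φpoly (Complex.exp (-(Complex.I * (ω : ℂ)))) l j) = 0 from ?_, mul_zero]
  apply Finset.sum_eq_zero
  intro l _
  by_cases hli : l ≠ i ∧ r < G.dist l i
  · rw [key _ _ _ hli.1 hli.2, zero_mul]
  · -- then G.dist l i ≤ r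
    have hdli : G.dist l i ≤ r := by
      by_cases h : l = i
      · subst h; simp [SimpleGraph.dist_self]
      · push_neg at hli
        exact hli h
    have htri := hG.dist_triangle (u := i) (v := l) (w := j)
    have hcomm : G.dist i l = G.dist l i := SimpleGraph.dist_comm
    have hlj : r < G.dist l j := by omega
    have hlj' : l ≠ j := by
      intro h; subst h
      simp [SimpleGraph.dist_self] at hlj
    rw [key _ _ _ hlj' hlj, mul_zero]
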